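/- Let Γ be a Neumaier graph containing an e-regular clique of order s+1 (s, e positive integers), and suppose that every clique of Γ of order e+1 is contained in a clique of order s+1. Then the number of cliques of order s+1 containing a given edge is the same for all edges of Γ. -/

import Mathlib

open scoped Classical
open Matrix

variable {V : Type*}

/-- `G` is edge-regular with parameters `(v, k, l)`: it has `v` vertices, every vertex has
degree `k`, and every pair of adjacent vertices has exactly `l` common neighbours. -/
def IsEdgeRegular [Fintype V] (G : SimpleGraph V) (v k l : ℕ) : Prop :=
  Fintype.card V = v ∧ G.IsRegularOfDegree k ∧
    ∀ x y : V, G.Adj x y → Fintype.card (G.commonNeighbors x y) = l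

/-- `C` is an `e`-regular clique of `G` (for `e > 0`): a clique such that every vertex
outside `C` is adjacent to exactly `e` vertices of `C`. -/
def IsRegularCliqueWith [Fintype V] (G : SimpleGraph V) (C : Finset V) (e : ℕ) : Prop :=
  G.IsClique ↑C ∧ 0 < e ∧ ∀ x : V, x ∉ C → (C.filter (fun y => G.Adj x y)).card = e

/-- A Neumaier graph: a non-complete edge-regular graph containing a regular clique. -/
def IsNeumaier [Fintype V] (G : SimpleGraph V) : Prop :=
  (∃ v k l : ℕ, IsEdgeRegular G v k l) ∧ G ≠ ⊤ ∧ ∃ (C : Finset V) (e : ℕ), IsRegularCliqueWith G C e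

/-- A graph is complete multipartite when non-adjacency (together with equality) is
a transitive relation on the vertices. -/
def IsCompleteMultipartite (G : SimpleGraph V) : Prop :=
  ∀ x y z : V, ¬G.Adj x y → ¬G.Adj y z → ¬G.Adj x z

/-- `θ` is a (real) eigenvalue of the adjacency matrix of `G`. -/
def IsAdjEigenvalue [Fintype V] (G : SimpleGraph V) (θ : ℝ) : Prop :=
  ∃ f : V → ℝ, f ≠ 0 ∧ G.adjMatrix ℝ *ᵥ f = θ • f

/-- The average, over all edges of `G`, of the number of common neighbours of the
two endpoints of the edge. -/
noncomputable def avgLambda [Fintype V] (G : SimpleGraph V) : ℝ :=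
  (∑ ed ∈ G.edgeFinset, Sym2.lift
      ⟨fun x y => ((G.commonNeighbors x y).ncard : ℝ),
       fun x y => by dsimp only; rw [SimpleGraph.commonNeighbors_symm]⟩ ed) / (G.edgeFinset.card : ℝ)

section Stmt6Aux
open Finset SimpleGraph

set_option linter.unusedSectionVars false

variable [Fintype V] {G : SimpleGraph V} {k l s e : ℕ}

/-- The set of neighbours of `z` inside `D`. -/
noncomputable def stmt6NIn (G : SimpleGraph V) (D : Finset V) (z : V) : Finset V :=
  D.filter (fun a => G.Adj z a)

lemma stmt6NIn_subset {D : Finset V} {z : V} : stmt6NIn G D z ⊆ D := Finset.filter_subset _ _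

lemma mem_stmt6NIn {D : Finset V} {z a : V} :
    a ∈ stmt6NIn G D z ↔ a ∈ D ∧ G.Adj z a := Finset.mem_filter

lemma self_not_mem_stmt6NIn {D : Finset V} {z : V} : z ∉ stmt6NIn G D z := by
  simp [stmt6NIn]

lemma stmt6_clique_adj {D : Finset V} (hD : G.IsClique (D : Set V)) {a b : V}
    (ha : a ∈ D) (hb : b ∈ D) (hne : a ≠ b) : G.Adj a b :=
  hD (Finset.mem_coe.mpr ha) (Finset.mem_coe.mpr hb) hne

/-- number of neighbours of a vertex of a clique, counted outside. -/
lemma stmt6_out_deg (hk : G.IsRegularOfDegree k) {D : Finset V}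
    (hD : G.IsNClique (s+1) D) {a : V} (ha : a ∈ D) :
    ((univ \ D).filter (fun z => G.Adj a z)).card + s = k := by
  have hsplit : (univ.filter (fun z => G.Adj a z)).card
      = (D.filter (fun z => G.Adj a z)).card + ((univ \ D).filter (fun z => G.Adj a z)).card := by
    rw [← Finset.card_union_of_disjoint]
    · congr 1
      ext z
      simp only [Finset.mem_union, Finset.mem_filter, Finset.mem_univ, Finset.mem_sdiff, true_and]
      tauto
    · refine Finset.disjoint_left.mpr ?_
      intro z hz hz'
      simp only [Finset.mem_filter, Finset.mem_sdiff, Finset.mem_univ, true_and] at hz hz'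
      tauto
  have hdeg : (univ.filter (fun z => G.Adj a z)).card = k := by
    rw [← hk a, SimpleGraph.degree]
    congr 1
    ext z
    simp [SimpleGraph.mem_neighborFinset]
  have hin : D.filter (fun z => G.Adj a z) = D.erase a := by
    ext z
    simp only [Finset.mem_filter, Finset.mem_erase]
    constructor
    · rintro ⟨hz, hadj⟩
      exact ⟨(G.ne_of_adj hadj).symm, hz⟩
    · rintro ⟨hne, hz⟩
      exact ⟨hz, stmt6_clique_adj hD.isClique ha hz (Ne.symm hne)⟩
  have hcard : (D.erase a).card = s := by
    rw [Finset.card_erase_of_mem ha, hD.card_eq]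
    omega
  rw [hin, hcard] at hsplit
  omega
  

/-- variant with the adjacency written the other way. -/
lemma stmt6_out_deg' (hk : G.IsRegularOfDegree k) {D : Finset V}
    (hD : G.IsNClique (s+1) D) {a : V} (ha : a ∈ D) :
    ((univ \ D).filter (fun z => G.Adj z a)).card + s = k := by
  have h := stmt6_out_deg hk hD ha
  have : (univ \ D).filter (fun z => G.Adj z a) = (univ \ D).filter (fun z => G.Adj a z) := by
    ext z; simp [G.adj_comm]
  rw [this]; exact h

lemma stmt6_common_count (hl : ∀ x y : V, G.Adj x y → Fintype.card (G.commonNeighbors x y) = l)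
    {x y : V} (hxy : G.Adj x y) :
    (univ.filter (fun z => G.Adj x z ∧ G.Adj y z)).card = l := by
  rw [← hl x y hxy, ← Set.toFinset_card]
  congr 1
  ext z
  simp [SimpleGraph.mem_commonNeighbors]

lemma stmt6_out_common (hl : ∀ x y : V, G.Adj x y → Fintype.card (G.commonNeighbors x y) = l)
    {D : Finset V} (hD : G.IsNClique (s+1) D) {a b : V} (ha : a ∈ D) (hb : b ∈ D) (hne : a ≠ b) :
    ((univ \ D).filter (fun z => G.Adj z a ∧ G.Adj z b)).card + s = l + 1 := by
  have hadj : G.Adj a b := stmt6_clique_adj hD.isClique ha hb hne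
  have htot : (univ.filter (fun z => G.Adj a z ∧ G.Adj b z)).card = l := stmt6_common_count hl hadj
  have hsplit : (univ.filter (fun z => G.Adj a z ∧ G.Adj b z)).card
      = (D.filter (fun z => G.Adj a z ∧ G.Adj b z)).card
        + ((univ \ D).filter (fun z => G.Adj a z ∧ G.Adj b z)).card := by
    rw [← Finset.card_union_of_disjoint]
    · congr 1
      ext z
      simp only [Finset.mem_union, Finset.mem_filter, Finset.mem_univ, Finset.mem_sdiff, true_and]
      tauto
    · refine Finset.disjoint_left.mpr ?_
      intro z hz hz'
      simp only [Finset.mem_filter, Finset.mem_sdiff, Finset.mem_univ, true_and] at hz hz'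
      tauto
  have hin : D.filter (fun z => G.Adj a z ∧ G.Adj b z) = (D \ {a, b}) := by
    ext z
    simp only [Finset.mem_filter, Finset.mem_sdiff, Finset.mem_insert, Finset.mem_singleton]
    constructor
    · rintro ⟨hz, h1, h2⟩
      exact ⟨hz, by rintro (rfl | rfl) <;> simp_all⟩
    · rintro ⟨hz, hne2⟩
      push_neg at hne2
      exact ⟨hz, stmt6_clique_adj hD.isClique ha hz (Ne.symm hne2.1),
        stmt6_clique_adj hD.isClique hb hz (Ne.symm hne2.2)⟩
  have hcard2 : (D \ {a, b}).card + 2 = s + 1 := by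
    have hsub : ({a, b} : Finset V) ⊆ D := by
      intro z hz
      simp only [Finset.mem_insert, Finset.mem_singleton] at hz
      rcases hz with rfl | rfl <;> assumption
    have : (D \ {a, b}).card = D.card - ({a,b} : Finset V).card := Finset.card_sdiff_of_subset hsub
    have hab : ({a,b} : Finset V).card = 2 := by
      rw [Finset.card_insert_of_notMem (by simpa using hne), Finset.card_singleton]
    have hDc := hD.card_eq
    have hle : ({a,b} : Finset V).card ≤ D.card := Finset.card_le_card hsub
    omega
  have hcomm : (univ \ D).filter (fun z => G.Adj z a ∧ G.Adj z b)
      = (univ \ D).filter (fun z => G.Adj a z ∧ G.Adj b z) := by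
    ext z; simp [G.adj_comm]
  rw [hin] at hsplit
  rw [hcomm]
  omega

lemma stmt6_sum_swap {D : Finset V} :
    ∑ z ∈ univ \ D, (stmt6NIn G D z).card
      = ∑ a ∈ D, ((univ \ D).filter (fun z => G.Adj z a)).card := by
  simp only [stmt6NIn, Finset.card_filter]
  rw [Finset.sum_comm]

lemma stmt6_S1 (hk : G.IsRegularOfDegree k) {D : Finset V} (hD : G.IsNClique (s+1) D) :
    (∑ z ∈ univ \ D, (stmt6NIn G D z).card) + (s+1)*s = (s+1)*k := by
  rw [stmt6_sum_swap]
  have h : ∑ a ∈ D, (((univ \ D).filter (fun z => G.Adj z a)).card + s) = ∑ a ∈ D, k :=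
    Finset.sum_congr rfl (fun a ha => by rw [stmt6_out_deg' hk hD ha])
  rw [Finset.sum_add_distrib, Finset.sum_const, Finset.sum_const, hD.card_eq, smul_eq_mul,
    smul_eq_mul] at h
  exact h


lemma stmt6_S2_key (hk : G.IsRegularOfDegree k)
    (hl : ∀ x y : V, G.Adj x y → Fintype.card (G.commonNeighbors x y) = l)
    {D : Finset V} (hD : G.IsNClique (s+1) D) {a : V} (ha : a ∈ D) :
    (∑ b ∈ D, ((univ \ D).filter (fun z => G.Adj z a ∧ G.Adj z b)).card) + s*s + s
      = k + s*(l+1) := by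
  have hdiag : ((univ \ D).filter (fun z => G.Adj z a ∧ G.Adj z a)).card
      = ((univ \ D).filter (fun z => G.Adj z a)).card := by
    congr 1; ext z; simp
  have hec : (D.erase a).card = s := by
    rw [Finset.card_erase_of_mem ha, hD.card_eq]
    omega
  have hsum : ∑ b ∈ D.erase a, (((univ \ D).filter (fun z => G.Adj z a ∧ G.Adj z b)).card + s)
      = ∑ _b ∈ D.erase a, (l+1) := by
    refine Finset.sum_congr rfl fun b hb => ?_
    have hbD : b ∈ D := Finset.mem_of_mem_erase hb
    have hba : b ≠ a := Finset.ne_of_mem_erase hb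
    exact stmt6_out_common hl hD ha hbD (Ne.symm hba)
  rw [Finset.sum_add_distrib, Finset.sum_const, Finset.sum_const, hec, smul_eq_mul,
    smul_eq_mul] at hsum
  have hsplit : ∑ b ∈ D, ((univ \ D).filter (fun z => G.Adj z a ∧ G.Adj z b)).card
      = (∑ b ∈ D.erase a, ((univ \ D).filter (fun z => G.Adj z a ∧ G.Adj z b)).card)
        + ((univ \ D).filter (fun z => G.Adj z a ∧ G.Adj z a)).card :=
    (Finset.sum_erase_add D _ ha).symm
  have hda := stmt6_out_deg' hk hD ha
  rw [hdiag] at hsplit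
  rw [hsplit]
  linarith

lemma stmt6_S2 (hk : G.IsRegularOfDegree k)
    (hl : ∀ x y : V, G.Adj x y → Fintype.card (G.commonNeighbors x y) = l)
    {D : Finset V} (hD : G.IsNClique (s+1) D) :
    (∑ z ∈ univ \ D, (stmt6NIn G D z).card * (stmt6NIn G D z).card) + (s+1)*(s*s)
      = (∑ z ∈ univ \ D, (stmt6NIn G D z).card) + (s+1)*(s*(l+1)) := by
  have hP : ∑ z ∈ univ \ D, (stmt6NIn G D z).card * (stmt6NIn G D z).card
      = ∑ a ∈ D, ∑ b ∈ D, ((univ \ D).filter (fun z => G.Adj z a ∧ G.Adj z b)).card := by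
    have h1 : ∀ z : V, (stmt6NIn G D z).card * (stmt6NIn G D z).card
        = ∑ a ∈ D, ∑ b ∈ D, (if G.Adj z a ∧ G.Adj z b then 1 else 0) := by
      intro z
      rw [stmt6NIn, Finset.card_filter, Finset.sum_mul_sum]
      refine Finset.sum_congr rfl fun a _ => Finset.sum_congr rfl fun b _ => ?_
      split_ifs <;> simp_all
    calc ∑ z ∈ univ \ D, (stmt6NIn G D z).card * (stmt6NIn G D z).card
        = ∑ z ∈ univ \ D, ∑ a ∈ D, ∑ b ∈ D, (if G.Adj z a ∧ G.Adj z b then 1 else 0) :=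
          Finset.sum_congr rfl fun z _ => h1 z
      _ = ∑ a ∈ D, ∑ z ∈ univ \ D, ∑ b ∈ D, (if G.Adj z a ∧ G.Adj z b then 1 else 0) :=
          Finset.sum_comm
      _ = ∑ a ∈ D, ∑ b ∈ D, ∑ z ∈ univ \ D, (if G.Adj z a ∧ G.Adj z b then 1 else 0) :=
          Finset.sum_congr rfl fun a _ => Finset.sum_comm
      _ = ∑ a ∈ D, ∑ b ∈ D, ((univ \ D).filter (fun z => G.Adj z a ∧ G.Adj z b)).card :=
          Finset.sum_congr rfl fun a _ => Finset.sum_congr rfl fun b _ =>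
            (Finset.card_filter _ _).symm
  have hkey : ∑ a ∈ D, ((∑ b ∈ D, ((univ \ D).filter (fun z => G.Adj z a ∧ G.Adj z b)).card)
      + s*s + s) = ∑ _a ∈ D, (k + s*(l+1)) :=
    Finset.sum_congr rfl fun a ha => stmt6_S2_key hk hl hD ha
  rw [Finset.sum_add_distrib, Finset.sum_add_distrib, Finset.sum_const, Finset.sum_const,
    Finset.sum_const, hD.card_eq, smul_eq_mul, smul_eq_mul, smul_eq_mul] at hkey
  have hS1 := stmt6_S1 hk hD
  rw [hP]
  nlinarith [hkey, hS1]


/-- Every `(s+1)`-clique is `e`-regular. -/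
lemma stmt6_allreg (hk : G.IsRegularOfDegree k)
    (hl : ∀ x y : V, G.Adj x y → Fintype.card (G.commonNeighbors x y) = l)
    {C : Finset V} (hC : IsRegularCliqueWith G C e) (hCcard : C.card = s + 1)
    {D : Finset V} (hD : G.IsNClique (s+1) D) {z : V} (hz : z ∉ D) :
    (stmt6NIn G D z).card = e := by
  have hCC : G.IsNClique (s+1) C := ⟨hC.1, hCcard⟩
  have hm : (univ \ C).card = (univ \ D).card := by
    rw [Finset.card_sdiff_of_subset (Finset.subset_univ _), Finset.card_sdiff_of_subset (Finset.subset_univ _),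
      hCcard, hD.card_eq]
  have hS1C : ∑ w ∈ univ \ C, (stmt6NIn G C w).card = (univ \ C).card * e := by
    rw [Finset.sum_congr rfl (fun w hw => ?_), Finset.sum_const, smul_eq_mul]
    exact hC.2.2 w (by simpa using (Finset.mem_sdiff.mp hw).2)
  have hS2C : ∑ w ∈ univ \ C, (stmt6NIn G C w).card * (stmt6NIn G C w).card
      = (univ \ C).card * (e * e) := by
    rw [Finset.sum_congr rfl (fun w hw => ?_), Finset.sum_const, smul_eq_mul]
    have hw' := hC.2.2 w (by simpa using (Finset.mem_sdiff.mp hw).2)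
    simp only [stmt6NIn]
    rw [hw']
  have h1C := stmt6_S1 hk hCC
  have h1D := stmt6_S1 hk hD
  have h2C := stmt6_S2 hk hl hCC
  have h2D := stmt6_S2 hk hl hD
  -- derive S1D and S2D values
  have hS1D : ∑ w ∈ univ \ D, (stmt6NIn G D w).card = (univ \ D).card * e := by
    rw [hS1C, hm] at h1C
    omega
  have hS2D : ∑ w ∈ univ \ D, (stmt6NIn G D w).card * (stmt6NIn G D w).card
      = (univ \ D).card * (e * e) := by
    rw [hS1C, hS2C, hm] at *
    set A := (s+1)*(s*s)
    set B := (s+1)*(s*(l+1))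
    set M := (univ \ D).card * (e*e)
    omega
  have hzero : ∑ w ∈ univ \ D, (((stmt6NIn G D w).card : ℤ) - (e : ℤ))^2 = 0 := by
    have hexp : ∀ w : V, (((stmt6NIn G D w).card : ℤ) - (e : ℤ))^2
        = ((stmt6NIn G D w).card * (stmt6NIn G D w).card : ℕ)
          - 2 * (e : ℤ) * ((stmt6NIn G D w).card : ℕ) + (e : ℤ)^2 := by
      intro w; push_cast; ring
    rw [Finset.sum_congr rfl (fun w _ => hexp w), Finset.sum_add_distrib,
      Finset.sum_sub_distrib, Finset.sum_const, ← Finset.mul_sum]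
    have c2 : ((∑ w ∈ univ \ D, (stmt6NIn G D w).card * (stmt6NIn G D w).card : ℕ) : ℤ)
        = ((univ \ D).card : ℤ) * (e : ℤ) * (e : ℤ) := by
      rw [hS2D]; push_cast; ring
    have c1 : ((∑ w ∈ univ \ D, (stmt6NIn G D w).card : ℕ) : ℤ)
        = ((univ \ D).card : ℤ) * (e : ℤ) := by
      rw [hS1D]; push_cast; ring
    push_cast at c1 c2 ⊢
    rw [c1, c2]
    ring
  have hall := (Finset.sum_eq_zero_iff_of_nonneg
    (fun w _ => sq_nonneg (((stmt6NIn G D w).card : ℤ) - (e : ℤ)))).mp hzero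
  have hzmem : z ∈ univ \ D := Finset.mem_sdiff.mpr ⟨Finset.mem_univ _, hz⟩
  have := hall z hzmem
  have h0 : ((stmt6NIn G D z).card : ℤ) - (e : ℤ) = 0 := by
    exact pow_eq_zero_iff (by norm_num) |>.mp this
  omega


/-- An `(e+1)`-clique lies in at most one `(s+1)`-clique. -/
lemma stmt6_unique (hk : G.IsRegularOfDegree k)
    (hl : ∀ x y : V, G.Adj x y → Fintype.card (G.commonNeighbors x y) = l)
    {C : Finset V} (hC : IsRegularCliqueWith G C e) (hCcard : C.card = s + 1)
    {H D D' : Finset V} (hH : G.IsClique (H : Set V)) (hHcard : H.card = e + 1)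
    (hD : G.IsNClique (s+1) D) (hD' : G.IsNClique (s+1) D')
    (hHD : H ⊆ D) (hHD' : H ⊆ D') : D = D' := by
  by_contra hne
  have hnsub : ¬ D' ⊆ D := fun hsub =>
    hne ((Finset.eq_of_subset_of_card_le hsub (by rw [hD.card_eq, hD'.card_eq])).symm)
  obtain ⟨z, hzD', hzD⟩ := Finset.not_subset.mp hnsub
  have hsub : H ⊆ stmt6NIn G D z := by
    intro a haH
    refine mem_stmt6NIn.mpr ⟨hHD haH, ?_⟩
    refine stmt6_clique_adj hD'.isClique hzD' (hHD' haH) ?_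
    rintro rfl
    exact hzD (hHD haH)
  have hle := Finset.card_le_card hsub
  rw [stmt6_allreg hk hl hC hCcard hD hzD, hHcard] at hle
  omega

lemma stmt6_existsUnique (hk : G.IsRegularOfDegree k)
    (hl : ∀ x y : V, G.Adj x y → Fintype.card (G.commonNeighbors x y) = l)
    {C : Finset V} (hC : IsRegularCliqueWith G C e) (hCcard : C.card = s + 1)
    (hext : ∀ H : Finset V, G.IsNClique (e + 1) H →
      ∃ D : Finset V, G.IsNClique (s + 1) D ∧ H ⊆ D)
    {H : Finset V} (hH : G.IsClique (H : Set V)) (hHcard : H.card = e + 1) :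
    ∃! D : Finset V, G.IsNClique (s+1) D ∧ H ⊆ D := by
  obtain ⟨D, hD, hHD⟩ := hext H ⟨hH, hHcard⟩
  refine ⟨D, ⟨hD, hHD⟩, ?_⟩
  rintro D' ⟨hD', hHD'⟩
  exact stmt6_unique hk hl hC hCcard hH hHcard hD' hD hHD' hHD

/-- Two distinct `(s+1)`-cliques containing a common `e`-set meet exactly in it. -/
lemma stmt6_inter_eq (hk : G.IsRegularOfDegree k)
    (hl : ∀ x y : V, G.Adj x y → Fintype.card (G.commonNeighbors x y) = l)
    {C : Finset V} (hC : IsRegularCliqueWith G C e) (hCcard : C.card = s + 1)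
    {D D' A : Finset V}
    (hD : G.IsNClique (s+1) D) (hD' : G.IsNClique (s+1) D') (hne : D ≠ D')
    (hAD : A ⊆ D) (hAD' : A ⊆ D') (hAcard : A.card = e) : D ∩ D' = A := by
  refine Finset.Subset.antisymm ?_ (Finset.subset_inter hAD hAD')
  intro w hw
  by_contra hwA
  have hw' := Finset.mem_inter.mp hw
  have hsub1 : insert w A ⊆ D := Finset.insert_subset hw'.1 hAD
  have hsub2 : insert w A ⊆ D' := Finset.insert_subset hw'.2 hAD'
  have hclique : G.IsClique ((insert w A : Finset V) : Set V) :=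
    SimpleGraph.IsClique.subset (by exact_mod_cast hsub1) hD.isClique
  have hcard : (insert w A).card = e + 1 := by
    rw [Finset.card_insert_of_notMem hwA, hAcard]
  exact hne (stmt6_unique hk hl hC hCcard hclique hcard hD hD' hsub1 hsub2)


lemma stmt6_edge_identity (hk : G.IsRegularOfDegree k)
    (hl : ∀ x y : V, G.Adj x y → Fintype.card (G.commonNeighbors x y) = l)
    {C : Finset V} (hC : IsRegularCliqueWith G C e) (hCcard : C.card = s + 1)
    (hext : ∀ H : Finset V, G.IsNClique (e + 1) H →
      ∃ D : Finset V, G.IsNClique (s + 1) D ∧ H ⊆ D)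
    {x y : V} (hxy : G.Adj x y) {p : ℕ} (hp : e + p = s + 1) :
    (univ.filter (fun D : Finset V => G.IsNClique (s+1) D ∧ x ∈ D ∧ y ∉ D)).card * p
      = (univ.filter (fun D : Finset V => G.IsNClique (s+1) D ∧ x ∈ D ∧ y ∈ D)).card
        * (univ.filter (fun z : V => G.Adj x z ∧ ¬ G.Adj y z ∧ z ≠ y)).card := by
  classical
  set Q : Finset ((Finset V × Finset V) × V) := univ.filter
    (fun t => (G.IsNClique (s+1) t.1.1 ∧ x ∈ t.1.1 ∧ y ∈ t.1.1) ∧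
              (G.IsNClique (s+1) t.1.2 ∧ x ∈ t.1.2 ∧ y ∉ t.1.2) ∧
              stmt6NIn G t.1.2 y ⊆ t.1.1 ∧ t.2 ∈ t.1.2 ∧ t.2 ∉ t.1.1) with hQdef
  have hmemQ : ∀ t : (Finset V × Finset V) × V, t ∈ Q ↔
      ((G.IsNClique (s+1) t.1.1 ∧ x ∈ t.1.1 ∧ y ∈ t.1.1) ∧
       (G.IsNClique (s+1) t.1.2 ∧ x ∈ t.1.2 ∧ y ∉ t.1.2) ∧
       stmt6NIn G t.1.2 y ⊆ t.1.1 ∧ t.2 ∈ t.1.2 ∧ t.2 ∉ t.1.1) := by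
    intro t; simp [hQdef]
  -- ## First count, fiberwise over the second clique
  have count1 : Q.card
      = (univ.filter (fun D : Finset V => G.IsNClique (s+1) D ∧ x ∈ D ∧ y ∉ D)).card * p := by
    rw [Finset.card_eq_sum_card_fiberwise (f := fun t => t.1.2)
      (t := univ.filter (fun D : Finset V => G.IsNClique (s+1) D ∧ x ∈ D ∧ y ∉ D))
      (fun t ht => by
        rw [Finset.mem_coe, hmemQ] at ht
        simp only [Finset.mem_coe, Finset.mem_filter, Finset.mem_univ, true_and]
        exact ht.2.1)]
    rw [Finset.sum_congr rfl (fun D hD => ?_), Finset.sum_const, smul_eq_mul]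
    -- now compute the fiber over D
    simp only [Finset.mem_filter, Finset.mem_univ, true_and] at hD
    obtain ⟨hDc, hxD, hyD⟩ := hD
    set A := stmt6NIn G D y with hA
    have hAcard : A.card = e := stmt6_allreg hk hl hC hCcard hDc hyD
    have hAD : A ⊆ D := stmt6NIn_subset
    have hyA : y ∉ A := fun h => hyD (hAD h)
    have hHclique : G.IsClique ((insert y A : Finset V) : Set V) := by
      rw [Finset.coe_insert]
      refine SimpleGraph.IsClique.insert
        (SimpleGraph.IsClique.subset (by exact_mod_cast hAD) hDc.isClique) ?_
      intro b hb _
      exact (mem_stmt6NIn.mp hb).2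
    have hHcard : (insert y A).card = e + 1 := by
      rw [Finset.card_insert_of_notMem hyA, hAcard]
    obtain ⟨D₀, ⟨hD₀c, hHD₀⟩, hD₀uniq⟩ :=
      stmt6_existsUnique hk hl hC hCcard hext hHclique hHcard
    have hyD₀ : y ∈ D₀ := hHD₀ (Finset.mem_insert_self _ _)
    have hAD₀ : A ⊆ D₀ := fun a ha => hHD₀ (Finset.mem_insert_of_mem ha)
    have hDneD₀ : D ≠ D₀ := fun h => hyD (h ▸ hyD₀)
    have hfiber : Q.filter (fun t => t.1.2 = D) = (D \ D₀).image (fun z => ((D₀, D), z)) := by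
      ext t
      obtain ⟨⟨D'', D2⟩, z⟩ := t
      simp only [Finset.mem_filter, Finset.mem_image, Finset.mem_sdiff]
      constructor
      · rintro ⟨htQ, ht2⟩
        rw [hmemQ] at htQ
        simp only at htQ ht2
        subst ht2
        obtain ⟨⟨hD''c, hxD'', hyD''⟩, _, hND'', hzD, hzD''⟩ := htQ
        have hHsub : insert y A ⊆ D'' := Finset.insert_subset hyD'' hND''
        have : D'' = D₀ := hD₀uniq D'' ⟨hD''c, hHsub⟩
        subst this
        exact ⟨z, ⟨hzD, hzD''⟩, rfl⟩
      · rintro ⟨z', ⟨hz'D, hz'D₀⟩, hEq⟩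
        rw [Prod.mk.injEq, Prod.mk.injEq] at hEq
        obtain ⟨⟨rfl, rfl⟩, rfl⟩ := hEq
        refine ⟨?_, rfl⟩
        rw [hmemQ]
        refine ⟨⟨hD₀c, ?_, hyD₀⟩, ⟨hDc, hxD, hyD⟩, hAD₀, hz'D, hz'D₀⟩
        exact hAD₀ (mem_stmt6NIn.mpr ⟨hxD, hxy.symm⟩)
    rw [hfiber, Finset.card_image_of_injective _ (fun a b hab => by
      simpa using hab)]
    have hinter : D ∩ D₀ = A := stmt6_inter_eq hk hl hC hCcard hDc hD₀c hDneD₀ hAD hAD₀ hAcard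
    have := Finset.card_inter_add_card_sdiff D D₀
    rw [hinter, hAcard] at this
    have hDcard := hDc.card_eq
    omega
  -- ## Second count, fiberwise over (first clique, vertex)
  have count2 : Q.card
      = (univ.filter (fun D : Finset V => G.IsNClique (s+1) D ∧ x ∈ D ∧ y ∈ D)).card
        * (univ.filter (fun z : V => G.Adj x z ∧ ¬ G.Adj y z ∧ z ≠ y)).card := by
    rw [← Finset.card_product]
    rw [Finset.card_eq_sum_card_fiberwise (f := fun t => (t.1.1, t.2))
      (t := (univ.filter (fun D : Finset V => G.IsNClique (s+1) D ∧ x ∈ D ∧ y ∈ D)) ×ˢ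
            (univ.filter (fun z : V => G.Adj x z ∧ ¬ G.Adj y z ∧ z ≠ y)))
      (fun t ht => by
        rw [Finset.mem_coe, hmemQ] at ht
        obtain ⟨⟨hD'c, hxD', hyD'⟩, ⟨hDc, hxD, hyD⟩, hND, hzD, hzD'⟩ := ht
        simp only [Finset.mem_coe, Finset.mem_product, Finset.mem_filter, Finset.mem_univ, true_and]
        have hzy : t.2 ≠ y := fun h => hyD (h ▸ hzD)
        have hzx : G.Adj x t.2 := by
          have : t.2 ≠ x := fun h => hzD' (h ▸ hxD')
          exact (stmt6_clique_adj hDc.isClique hzD hxD this).symm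
        have hnzy : ¬ G.Adj y t.2 := by
          intro hadj
          exact hzD' (hND (mem_stmt6NIn.mpr ⟨hzD, hadj⟩))
        exact ⟨⟨hD'c, hxD', hyD'⟩, hzx, hnzy, hzy⟩)]
    rw [Finset.sum_congr rfl (fun b hb => ?_), Finset.sum_const, smul_eq_mul, mul_one]
    -- fiber over (D', z) is a singleton
    obtain ⟨D', z⟩ := b
    simp only [Finset.mem_product, Finset.mem_filter, Finset.mem_univ, true_and] at hb
    obtain ⟨⟨hD'c, hxD', hyD'⟩, hxz, hnyz, hzy⟩ := hb
    have hzD' : z ∉ D' := by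
      intro hzD'
      exact hnyz (stmt6_clique_adj hD'c.isClique hyD' hzD' (Ne.symm hzy))
    set A := stmt6NIn G D' z with hA
    have hAcard : A.card = e := stmt6_allreg hk hl hC hCcard hD'c hzD'
    have hAD' : A ⊆ D' := stmt6NIn_subset
    have hzA : z ∉ A := self_not_mem_stmt6NIn
    have hHclique : G.IsClique ((insert z A : Finset V) : Set V) := by
      rw [Finset.coe_insert]
      refine SimpleGraph.IsClique.insert
        (SimpleGraph.IsClique.subset (by exact_mod_cast hAD') hD'c.isClique) ?_
      intro b hb _
      exact (mem_stmt6NIn.mp hb).2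
    have hHcard : (insert z A).card = e + 1 := by
      rw [Finset.card_insert_of_notMem hzA, hAcard]
    obtain ⟨D₀, ⟨hD₀c, hHD₀⟩, hD₀uniq⟩ :=
      stmt6_existsUnique hk hl hC hCcard hext hHclique hHcard
    have hzD₀ : z ∈ D₀ := hHD₀ (Finset.mem_insert_self _ _)
    have hAD₀ : A ⊆ D₀ := fun a ha => hHD₀ (Finset.mem_insert_of_mem ha)
    have hyD₀ : y ∉ D₀ := by
      intro hyD₀
      exact hnyz ((stmt6_clique_adj hD₀c.isClique hzD₀ hyD₀ hzy).symm)
    have hxD₀ : x ∈ D₀ := hAD₀ (mem_stmt6NIn.mpr ⟨hxD', hxz.symm⟩)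
    have hND₀ : stmt6NIn G D₀ y = A := by
      have hsub : A ⊆ stmt6NIn G D₀ y := by
        intro a ha
        have haD' : a ∈ D' := hAD' ha
        have hay : a ≠ y := by
          rintro rfl
          exact hnyz ((mem_stmt6NIn.mp ha).2).symm
        exact mem_stmt6NIn.mpr ⟨hAD₀ ha, stmt6_clique_adj hD'c.isClique hyD' haD' hay.symm⟩
      refine (Finset.eq_of_subset_of_card_le hsub ?_).symm
      rw [stmt6_allreg hk hl hC hCcard hD₀c hyD₀, hAcard]
    have hfiber : Q.filter (fun t => (t.1.1, t.2) = (D', z)) = {((D', D₀), z)} := by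
      ext t
      obtain ⟨⟨D'', D2⟩, z2⟩ := t
      simp only [Finset.mem_filter, Finset.mem_singleton, Prod.mk.injEq]
      constructor
      · rintro ⟨htQ, rfl, rfl⟩
        rw [hmemQ] at htQ
        simp only at htQ
        obtain ⟨_, ⟨hD2c, hxD2, hyD2⟩, hND2, hzD2, hzD''⟩ := htQ
        refine ⟨⟨rfl, ?_⟩, rfl⟩
        -- show D2 = D₀
        have hD2ne : D2 ≠ D'' := fun h => hyD2 (h ▸ hyD')
        have hinter : D2 ∩ D'' = stmt6NIn G D2 y :=
          stmt6_inter_eq hk hl hC hCcard hD2c hD'c hD2ne stmt6NIn_subset hND2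
            (stmt6_allreg hk hl hC hCcard hD2c hyD2)
        have hNeq : stmt6NIn G D'' z2 = stmt6NIn G D2 y := by
          have hsub : stmt6NIn G D2 y ⊆ stmt6NIn G D'' z2 := by
            intro a ha
            have haD2 : a ∈ D2 := stmt6NIn_subset ha
            have haD'' : a ∈ D'' := hND2 ha
            have hza : z2 ≠ a := fun h => hzD'' (h ▸ haD'')
            exact mem_stmt6NIn.mpr ⟨haD'', stmt6_clique_adj hD2c.isClique hzD2 haD2 hza⟩
          refine (Finset.eq_of_subset_of_card_le hsub ?_).symm
          rw [stmt6_allreg hk hl hC hCcard hD'c hzD',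
            stmt6_allreg hk hl hC hCcard hD2c hyD2]
        have hHsub : insert z2 A ⊆ D2 := by
          rw [hA, hNeq]
          refine Finset.insert_subset hzD2 ?_
          rw [← hinter]
          exact Finset.inter_subset_left
        exact (hD₀uniq D2 ⟨hD2c, hHsub⟩)
      · rintro ⟨⟨rfl, rfl⟩, rfl⟩
        refine ⟨?_, rfl, rfl⟩
        rw [hmemQ]
        exact ⟨⟨hD'c, hxD', hyD'⟩, ⟨hD₀c, hxD₀, hyD₀⟩, by rw [hND₀]; exact hAD', hzD₀, hzD'⟩
    rw [hfiber, Finset.card_singleton]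
  rw [← count1, count2]


lemma stmt6_vertex_identity (hk : G.IsRegularOfDegree k)
    (hl : ∀ x y : V, G.Adj x y → Fintype.card (G.commonNeighbors x y) = l)
    {C : Finset V} (hC : IsRegularCliqueWith G C e) (hCcard : C.card = s + 1)
    (hext : ∀ H : Finset V, G.IsNClique (e + 1) H →
      ∃ D : Finset V, G.IsNClique (s + 1) D ∧ H ⊆ D)
    (x : V) {p : ℕ} (hp : e + p = s + 1) :
    (univ.filter (fun D : Finset V => G.IsNClique (s+1) D ∧ x ∉ D)).card * p
      = (univ.filter (fun D : Finset V => G.IsNClique (s+1) D ∧ x ∈ D)).card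
        * (univ.filter (fun z : V => ¬ G.Adj x z ∧ z ≠ x)).card := by
  classical
  set Q : Finset ((Finset V × Finset V) × V) := univ.filter
    (fun t => (G.IsNClique (s+1) t.1.1 ∧ x ∈ t.1.1) ∧
              (G.IsNClique (s+1) t.1.2 ∧ x ∉ t.1.2) ∧
              stmt6NIn G t.1.2 x ⊆ t.1.1 ∧ t.2 ∈ t.1.2 ∧ t.2 ∉ t.1.1) with hQdef
  have hmemQ : ∀ t : (Finset V × Finset V) × V, t ∈ Q ↔
      ((G.IsNClique (s+1) t.1.1 ∧ x ∈ t.1.1) ∧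
       (G.IsNClique (s+1) t.1.2 ∧ x ∉ t.1.2) ∧
       stmt6NIn G t.1.2 x ⊆ t.1.1 ∧ t.2 ∈ t.1.2 ∧ t.2 ∉ t.1.1) := by
    intro t; simp [hQdef]
  have count1 : Q.card
      = (univ.filter (fun D : Finset V => G.IsNClique (s+1) D ∧ x ∉ D)).card * p := by
    rw [Finset.card_eq_sum_card_fiberwise (f := fun t => t.1.2)
      (t := univ.filter (fun D : Finset V => G.IsNClique (s+1) D ∧ x ∉ D))
      (fun t ht => by
        rw [Finset.mem_coe, hmemQ] at ht
        simp only [Finset.mem_coe, Finset.mem_filter, Finset.mem_univ, true_and]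
        exact ht.2.1)]
    rw [Finset.sum_congr rfl (fun D hD => ?_), Finset.sum_const, smul_eq_mul]
    simp only [Finset.mem_filter, Finset.mem_univ, true_and] at hD
    obtain ⟨hDc, hxD⟩ := hD
    set A := stmt6NIn G D x with hA
    have hAcard : A.card = e := stmt6_allreg hk hl hC hCcard hDc hxD
    have hAD : A ⊆ D := stmt6NIn_subset
    have hxA : x ∉ A := fun h => hxD (hAD h)
    have hHclique : G.IsClique ((insert x A : Finset V) : Set V) := by
      rw [Finset.coe_insert]
      refine SimpleGraph.IsClique.insert
        (SimpleGraph.IsClique.subset (by exact_mod_cast hAD) hDc.isClique) ?_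
      intro b hb _
      exact (mem_stmt6NIn.mp hb).2
    have hHcard : (insert x A).card = e + 1 := by
      rw [Finset.card_insert_of_notMem hxA, hAcard]
    obtain ⟨D₀, ⟨hD₀c, hHD₀⟩, hD₀uniq⟩ :=
      stmt6_existsUnique hk hl hC hCcard hext hHclique hHcard
    have hxD₀ : x ∈ D₀ := hHD₀ (Finset.mem_insert_self _ _)
    have hAD₀ : A ⊆ D₀ := fun a ha => hHD₀ (Finset.mem_insert_of_mem ha)
    have hDneD₀ : D ≠ D₀ := fun h => hxD (h ▸ hxD₀)
    have hfiber : Q.filter (fun t => t.1.2 = D) = (D \ D₀).image (fun z => ((D₀, D), z)) := by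
      ext t
      obtain ⟨⟨D'', D2⟩, z⟩ := t
      simp only [Finset.mem_filter, Finset.mem_image, Finset.mem_sdiff]
      constructor
      · rintro ⟨htQ, ht2⟩
        rw [hmemQ] at htQ
        simp only at htQ ht2
        subst ht2
        obtain ⟨⟨hD''c, hxD''⟩, _, hND'', hzD, hzD''⟩ := htQ
        have hHsub : insert x A ⊆ D'' := Finset.insert_subset hxD'' hND''
        have : D'' = D₀ := hD₀uniq D'' ⟨hD''c, hHsub⟩
        subst this
        exact ⟨z, ⟨hzD, hzD''⟩, rfl⟩
      · rintro ⟨z', ⟨hz'D, hz'D₀⟩, hEq⟩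
        rw [Prod.mk.injEq, Prod.mk.injEq] at hEq
        obtain ⟨⟨rfl, rfl⟩, rfl⟩ := hEq
        refine ⟨?_, rfl⟩
        rw [hmemQ]
        exact ⟨⟨hD₀c, hxD₀⟩, ⟨hDc, hxD⟩, hAD₀, hz'D, hz'D₀⟩
    rw [hfiber, Finset.card_image_of_injective _ (fun a b hab => by
      simpa using hab)]
    have hinter : D ∩ D₀ = A := stmt6_inter_eq hk hl hC hCcard hDc hD₀c hDneD₀ hAD hAD₀ hAcard
    have := Finset.card_inter_add_card_sdiff D D₀
    rw [hinter, hAcard] at this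
    have hDcard := hDc.card_eq
    omega
  have count2 : Q.card
      = (univ.filter (fun D : Finset V => G.IsNClique (s+1) D ∧ x ∈ D)).card
        * (univ.filter (fun z : V => ¬ G.Adj x z ∧ z ≠ x)).card := by
    rw [← Finset.card_product]
    rw [Finset.card_eq_sum_card_fiberwise (f := fun t => (t.1.1, t.2))
      (t := (univ.filter (fun D : Finset V => G.IsNClique (s+1) D ∧ x ∈ D)) ×ˢ
            (univ.filter (fun z : V => ¬ G.Adj x z ∧ z ≠ x)))
      (fun t ht => by
        rw [Finset.mem_coe, hmemQ] at ht
        obtain ⟨⟨hD'c, hxD'⟩, ⟨hDc, hxD⟩, hND, hzD, hzD'⟩ := ht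
        simp only [Finset.mem_coe, Finset.mem_product, Finset.mem_filter, Finset.mem_univ, true_and]
        have hzx : t.2 ≠ x := fun h => hxD (h ▸ hzD)
        have hnxz : ¬ G.Adj x t.2 := by
          intro hadj
          exact hzD' (hND (mem_stmt6NIn.mpr ⟨hzD, hadj⟩))
        exact ⟨⟨hD'c, hxD'⟩, hnxz, hzx⟩)]
    rw [Finset.sum_congr rfl (fun b hb => ?_), Finset.sum_const, smul_eq_mul, mul_one]
    obtain ⟨D', z⟩ := b
    simp only [Finset.mem_product, Finset.mem_filter, Finset.mem_univ, true_and] at hb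
    obtain ⟨⟨hD'c, hxD'⟩, hnxz, hzx⟩ := hb
    have hzD' : z ∉ D' := by
      intro hzD'
      exact hnxz (stmt6_clique_adj hD'c.isClique hxD' hzD' (Ne.symm hzx))
    set A := stmt6NIn G D' z with hA
    have hAcard : A.card = e := stmt6_allreg hk hl hC hCcard hD'c hzD'
    have hAD' : A ⊆ D' := stmt6NIn_subset
    have hzA : z ∉ A := self_not_mem_stmt6NIn
    have hHclique : G.IsClique ((insert z A : Finset V) : Set V) := by
      rw [Finset.coe_insert]
      refine SimpleGraph.IsClique.insert
        (SimpleGraph.IsClique.subset (by exact_mod_cast hAD') hD'c.isClique) ?_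
      intro b hb _
      exact (mem_stmt6NIn.mp hb).2
    have hHcard : (insert z A).card = e + 1 := by
      rw [Finset.card_insert_of_notMem hzA, hAcard]
    obtain ⟨D₀, ⟨hD₀c, hHD₀⟩, hD₀uniq⟩ :=
      stmt6_existsUnique hk hl hC hCcard hext hHclique hHcard
    have hzD₀ : z ∈ D₀ := hHD₀ (Finset.mem_insert_self _ _)
    have hAD₀ : A ⊆ D₀ := fun a ha => hHD₀ (Finset.mem_insert_of_mem ha)
    have hxD₀ : x ∉ D₀ := by
      intro hxD₀
      exact hnxz ((stmt6_clique_adj hD₀c.isClique hzD₀ hxD₀ (fun h => hzx h)).symm)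
    have hND₀ : stmt6NIn G D₀ x = A := by
      have hsub : A ⊆ stmt6NIn G D₀ x := by
        intro a ha
        have haD' : a ∈ D' := hAD' ha
        have hax : a ≠ x := by
          rintro rfl
          exact hnxz ((mem_stmt6NIn.mp ha).2).symm
        exact mem_stmt6NIn.mpr ⟨hAD₀ ha, stmt6_clique_adj hD'c.isClique hxD' haD' hax.symm⟩
      refine (Finset.eq_of_subset_of_card_le hsub ?_).symm
      rw [stmt6_allreg hk hl hC hCcard hD₀c hxD₀, hAcard]
    have hfiber : Q.filter (fun t => (t.1.1, t.2) = (D', z)) = {((D', D₀), z)} := by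
      ext t
      obtain ⟨⟨D'', D2⟩, z2⟩ := t
      simp only [Finset.mem_filter, Finset.mem_singleton, Prod.mk.injEq]
      constructor
      · rintro ⟨htQ, rfl, rfl⟩
        rw [hmemQ] at htQ
        simp only at htQ
        obtain ⟨_, ⟨hD2c, hxD2⟩, hND2, hzD2, hzD''⟩ := htQ
        refine ⟨⟨rfl, ?_⟩, rfl⟩
        have hD2ne : D2 ≠ D'' := fun h => hxD2 (h ▸ hxD')
        have hinter : D2 ∩ D'' = stmt6NIn G D2 x :=
          stmt6_inter_eq hk hl hC hCcard hD2c hD'c hD2ne stmt6NIn_subset hND2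
            (stmt6_allreg hk hl hC hCcard hD2c hxD2)
        have hNeq : stmt6NIn G D'' z2 = stmt6NIn G D2 x := by
          have hsub : stmt6NIn G D2 x ⊆ stmt6NIn G D'' z2 := by
            intro a ha
            have haD2 : a ∈ D2 := stmt6NIn_subset ha
            have haD'' : a ∈ D'' := hND2 ha
            have hza : z2 ≠ a := fun h => hzD'' (h ▸ haD'')
            exact mem_stmt6NIn.mpr ⟨haD'', stmt6_clique_adj hD2c.isClique hzD2 haD2 hza⟩
          refine (Finset.eq_of_subset_of_card_le hsub ?_).symm
          rw [stmt6_allreg hk hl hC hCcard hD'c hzD',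
            stmt6_allreg hk hl hC hCcard hD2c hxD2]
        have hHsub : insert z2 A ⊆ D2 := by
          rw [hA, hNeq]
          refine Finset.insert_subset hzD2 ?_
          rw [← hinter]
          exact Finset.inter_subset_left
        exact (hD₀uniq D2 ⟨hD2c, hHsub⟩)
      · rintro ⟨⟨rfl, rfl⟩, rfl⟩
        refine ⟨?_, rfl, rfl⟩
        rw [hmemQ]
        exact ⟨⟨hD'c, hxD'⟩, ⟨hD₀c, hxD₀⟩, by rw [hND₀]; exact hAD', hzD₀, hzD'⟩
    rw [hfiber, Finset.card_singleton]
  rw [← count1, count2]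


lemma stmt6_e_le_s (hnc : G ≠ ⊤)
    {C : Finset V} (hC : IsRegularCliqueWith G C e) (hCcard : C.card = s + 1)
    (hext : ∀ H : Finset V, G.IsNClique (e + 1) H →
      ∃ D : Finset V, G.IsNClique (s + 1) D ∧ H ⊆ D) : e ≤ s := by
  by_contra hcon
  push_neg at hcon
  have hU : ∃ u, u ∉ C := by
    by_contra hall
    push_neg at hall
    apply hnc
    ext a b
    simp only [SimpleGraph.top_adj]
    exact ⟨fun h => G.ne_of_adj h, fun h => stmt6_clique_adj hC.1 (hall a) (hall b) h⟩
  obtain ⟨u, hu⟩ := hU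
  have he := hC.2.2 u hu
  have hle : (C.filter (fun y => G.Adj u y)).card ≤ C.card :=
    Finset.card_le_card (Finset.filter_subset _ _)
  rw [he, hCcard] at hle
  have heq : e = s + 1 := by omega
  have hfull : C.filter (fun y => G.Adj u y) = C :=
    Finset.eq_of_subset_of_card_le (Finset.filter_subset _ _) (by rw [he, heq, hCcard])
  have hclique : G.IsClique ((insert u C : Finset V) : Set V) := by
    rw [Finset.coe_insert]
    refine SimpleGraph.IsClique.insert hC.1 ?_
    intro b hb _
    have : b ∈ C.filter (fun y => G.Adj u y) := by rw [hfull]; exact_mod_cast hb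
    exact (Finset.mem_filter.mp this).2
  have hcard : (insert u C).card = e + 1 := by
    rw [Finset.card_insert_of_notMem hu, hCcard, heq]
  obtain ⟨D, hD, hsub⟩ := hext _ ⟨hclique, hcard⟩
  have hle2 := Finset.card_le_card hsub
  rw [hcard, hD.card_eq, heq] at hle2
  omega

lemma stmt6_W_count (hk : G.IsRegularOfDegree k) (x : V) :
    (univ.filter (fun z : V => ¬ G.Adj x z ∧ z ≠ x)).card + 1 + k = Fintype.card V := by
  have hdeg : (univ.filter (fun z => G.Adj x z)).card = k := by
    rw [← hk x, SimpleGraph.degree]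
    congr 1
    ext z
    simp [SimpleGraph.mem_neighborFinset]
  have h1 : (univ.filter (fun z => G.Adj x z)).card
      + (univ.filter (fun z => ¬ G.Adj x z)).card = Fintype.card V := by
    rw [Finset.card_filter_add_card_filter_not, Finset.card_univ]
  have h2 : univ.filter (fun z : V => ¬ G.Adj x z)
      = insert x (univ.filter (fun z : V => ¬ G.Adj x z ∧ z ≠ x)) := by
    ext z
    simp only [Finset.mem_filter, Finset.mem_univ, true_and, Finset.mem_insert]
    constructor
    · intro h
      by_cases hz : z = x
      · exact Or.inl hz
      · exact Or.inr ⟨h, hz⟩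
    · rintro (rfl | ⟨h, _⟩)
      · exact fun h => G.irrefl h
      · exact h
  have h3 : x ∉ univ.filter (fun z : V => ¬ G.Adj x z ∧ z ≠ x) := by
    simp
  rw [h2, Finset.card_insert_of_notMem h3] at h1
  omega

lemma stmt6_Z_count (hk : G.IsRegularOfDegree k)
    (hl : ∀ x y : V, G.Adj x y → Fintype.card (G.commonNeighbors x y) = l)
    {x y : V} (hxy : G.Adj x y) :
    (univ.filter (fun z : V => G.Adj x z ∧ ¬ G.Adj y z ∧ z ≠ y)).card + 1 + l = k := by
  have hdeg : (univ.filter (fun z => G.Adj x z)).card = k := by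
    rw [← hk x, SimpleGraph.degree]
    congr 1
    ext z
    simp [SimpleGraph.mem_neighborFinset]
  have h1 : ((univ.filter (fun z => G.Adj x z)).filter (fun z => G.Adj y z)).card
      + ((univ.filter (fun z => G.Adj x z)).filter (fun z => ¬ G.Adj y z)).card = k := by
    rw [Finset.card_filter_add_card_filter_not, hdeg]
  rw [Finset.filter_filter, Finset.filter_filter] at h1
  have hcom : (univ.filter (fun z => G.Adj x z ∧ G.Adj y z)).card = l :=
    stmt6_common_count hl hxy
  have h2 : univ.filter (fun z : V => G.Adj x z ∧ ¬ G.Adj y z)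
      = insert y (univ.filter (fun z : V => G.Adj x z ∧ ¬ G.Adj y z ∧ z ≠ y)) := by
    ext z
    simp only [Finset.mem_filter, Finset.mem_univ, true_and, Finset.mem_insert]
    constructor
    · rintro ⟨ha, hn⟩
      by_cases hz : z = y
      · exact Or.inl hz
      · exact Or.inr ⟨ha, hn, hz⟩
    · rintro (rfl | ⟨ha, hn, _⟩)
      · exact ⟨hxy, fun h => G.irrefl h⟩
      · exact ⟨ha, hn⟩
  have h3 : y ∉ univ.filter (fun z : V => G.Adj x z ∧ ¬ G.Adj y z ∧ z ≠ y) := by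
    simp
  rw [hcom, h2, Finset.card_insert_of_notMem h3] at h1
  omega

lemma stmt6_vertex_split (x : V) :
    (univ.filter (fun D : Finset V => G.IsNClique (s+1) D ∧ x ∉ D)).card
      + (univ.filter (fun D : Finset V => G.IsNClique (s+1) D ∧ x ∈ D)).card
      = (univ.filter (fun D : Finset V => G.IsNClique (s+1) D)).card := by
  rw [← Finset.card_union_of_disjoint]
  · congr 1
    ext D
    simp only [Finset.mem_union, Finset.mem_filter, Finset.mem_univ, true_and]
    tauto
  · refine Finset.disjoint_left.mpr ?_
    intro D hD hD'
    simp only [Finset.mem_filter, Finset.mem_univ, true_and] at hD hD'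
    exact hD.2 hD'.2

lemma stmt6_edge_split (x y : V) :
    (univ.filter (fun D : Finset V => G.IsNClique (s+1) D ∧ x ∈ D ∧ y ∉ D)).card
      + (univ.filter (fun D : Finset V => G.IsNClique (s+1) D ∧ x ∈ D ∧ y ∈ D)).card
      = (univ.filter (fun D : Finset V => G.IsNClique (s+1) D ∧ x ∈ D)).card := by
  rw [← Finset.card_union_of_disjoint]
  · congr 1
    ext D
    simp only [Finset.mem_union, Finset.mem_filter, Finset.mem_univ, true_and]
    tauto
  · refine Finset.disjoint_left.mpr ?_
    intro D hD hD'
    simp only [Finset.mem_filter, Finset.mem_univ, true_and] at hD hD'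
    exact hD.2.2 hD'.2.2

end Stmt6Aux

open Finset

/-- In a Neumaier graph with an `e`-regular clique of order `s + 1`, if every
clique of order `e + 1` is contained in a clique of order `s + 1`, then the number of cliques
of order `s + 1` containing a given edge is the same for all edges. -/
theorem stmt6 [Fintype V] (G : SimpleGraph V) (v k l s e : ℕ)
    (hER : IsEdgeRegular G v k l) (hnc : G ≠ ⊤) (hs : 0 < s) (he : 0 < e)
    (C : Finset V) (hC : IsRegularCliqueWith G C e) (hCcard : C.card = s + 1)
    (hext : ∀ H : Finset V, G.IsNClique (e + 1) H → ∃ D : Finset V, G.IsNClique (s + 1) D ∧ H ⊆ D) :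
    ∃ N : ℕ, ∀ x y : V, G.Adj x y →
      (Finset.univ.filter (fun D : Finset V => G.IsNClique (s + 1) D ∧ x ∈ D ∧ y ∈ D)).card = N := by
  classical
  obtain ⟨hv, hk, hl⟩ := hER
  have hes : e ≤ s := stmt6_e_le_s hnc hC hCcard hext
  set p := s + 1 - e with hpdef
  have hp : e + p = s + 1 := by omega
  have hppos : 0 < p := by omega
  -- a base edge inside C
  have hC2 : 1 < C.card := by rw [hCcard]; omega
  obtain ⟨x₀, hx₀, y₀, hy₀, hne₀⟩ := Finset.one_lt_card.mp hC2
  have hadj₀ : G.Adj x₀ y₀ := stmt6_clique_adj hC.1 hx₀ hy₀ hne₀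
  -- number of cliques through a vertex is constant
  have hvert : ∀ x : V,
      (univ.filter (fun D : Finset V => G.IsNClique (s+1) D ∧ x ∈ D)).card
        = (univ.filter (fun D : Finset V => G.IsNClique (s+1) D ∧ x₀ ∈ D)).card := by
    intro x
    have key : ∀ z : V,
        (univ.filter (fun D : Finset V => G.IsNClique (s+1) D ∧ z ∈ D)).card
          * ((univ.filter (fun w : V => ¬ G.Adj z w ∧ w ≠ z)).card + p)
        = (univ.filter (fun D : Finset V => G.IsNClique (s+1) D)).card * p := by
      intro z
      have h1 := stmt6_vertex_identity hk hl hC hCcard hext z hp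
      have h2 := stmt6_vertex_split (G := G) (s := s) z
      calc (univ.filter (fun D : Finset V => G.IsNClique (s+1) D ∧ z ∈ D)).card
          * ((univ.filter (fun w : V => ¬ G.Adj z w ∧ w ≠ z)).card + p)
          = (univ.filter (fun D : Finset V => G.IsNClique (s+1) D ∧ z ∈ D)).card
            * (univ.filter (fun w : V => ¬ G.Adj z w ∧ w ≠ z)).card
            + (univ.filter (fun D : Finset V => G.IsNClique (s+1) D ∧ z ∈ D)).card * p := by ring
        _ = (univ.filter (fun D : Finset V => G.IsNClique (s+1) D ∧ z ∉ D)).card * p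
            + (univ.filter (fun D : Finset V => G.IsNClique (s+1) D ∧ z ∈ D)).card * p := by
              rw [h1]
        _ = (univ.filter (fun D : Finset V => G.IsNClique (s+1) D)).card * p := by
              rw [← add_mul, h2]
    have hW : (univ.filter (fun w : V => ¬ G.Adj x w ∧ w ≠ x)).card
        = (univ.filter (fun w : V => ¬ G.Adj x₀ w ∧ w ≠ x₀)).card := by
      have h1 := stmt6_W_count hk x
      have h2 := stmt6_W_count hk x₀
      omega
    have hx := key x
    have hx0 := key x₀
    rw [hW] at hx
    rw [← hx0] at hx
    exact Nat.eq_of_mul_eq_mul_right (by omega) hx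
  -- conclusion
  refine ⟨(univ.filter (fun D : Finset V => G.IsNClique (s+1) D ∧ x₀ ∈ D ∧ y₀ ∈ D)).card, ?_⟩
  intro x y hxy
  have key : ∀ (a b : V), G.Adj a b →
      (univ.filter (fun D : Finset V => G.IsNClique (s+1) D ∧ a ∈ D ∧ b ∈ D)).card
        * ((univ.filter (fun z : V => G.Adj a z ∧ ¬ G.Adj b z ∧ z ≠ b)).card + p)
      = (univ.filter (fun D : Finset V => G.IsNClique (s+1) D ∧ a ∈ D)).card * p := by
    intro a b hab
    have h1 := stmt6_edge_identity hk hl hC hCcard hext hab hp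
    have h2 := stmt6_edge_split (G := G) (s := s) a b
    calc (univ.filter (fun D : Finset V => G.IsNClique (s+1) D ∧ a ∈ D ∧ b ∈ D)).card
        * ((univ.filter (fun z : V => G.Adj a z ∧ ¬ G.Adj b z ∧ z ≠ b)).card + p)
        = (univ.filter (fun D : Finset V => G.IsNClique (s+1) D ∧ a ∈ D ∧ b ∈ D)).card
          * (univ.filter (fun z : V => G.Adj a z ∧ ¬ G.Adj b z ∧ z ≠ b)).card
          + (univ.filter (fun D : Finset V => G.IsNClique (s+1) D ∧ a ∈ D ∧ b ∈ D)).card * p := by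
            ring
      _ = (univ.filter (fun D : Finset V => G.IsNClique (s+1) D ∧ a ∈ D ∧ b ∉ D)).card * p
          + (univ.filter (fun D : Finset V => G.IsNClique (s+1) D ∧ a ∈ D ∧ b ∈ D)).card * p := by
            rw [h1]
      _ = (univ.filter (fun D : Finset V => G.IsNClique (s+1) D ∧ a ∈ D)).card * p := by
            rw [← add_mul, h2]
  have hZ : (univ.filter (fun z : V => G.Adj x z ∧ ¬ G.Adj y z ∧ z ≠ y)).card
      = (univ.filter (fun z : V => G.Adj x₀ z ∧ ¬ G.Adj y₀ z ∧ z ≠ y₀)).card := by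
    have h1 := stmt6_Z_count hk hl hxy
    have h2 := stmt6_Z_count hk hl hadj₀
    omega
  have hxykey := key x y hxy
  have h0key := key x₀ y₀ hadj₀
  rw [hZ, hvert x] at hxykey
  rw [← h0key] at hxykey
  exact Nat.eq_of_mul_eq_mul_right (by omega) hxykey
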